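/- Let R be a commutative ring, L a finite locally free R-module, and A any symmetric bilinear form on Hom_R(L,R). Then the symmetric bilinear form on the R[t]-module L[t] ⊕ Hom_R(L,R)[t] given by the block matrix [[0, id],[id, tA]] is non-degenerate, its specialization at t = 1 is [[0, id],[id, A]], and its specialization at t = 0 is the hyperbolic form [[0, id],[id, 0]] on L ⊕ Hom_R(L,R). -/

import Mathlib

set_option maxHeartbeats 1000000
set_option maxRecDepth 4000
open TensorProduct Polynomial

noncomputable def hypForm (R L : Type*) [CommRing R] [AddCommGroup L] [Module R L] :
    (L × Module.Dual R L) →ₗ[R] (L × Module.Dual R L) →ₗ[R] R :=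
  LinearMap.mk₂ R (fun p q => p.2 q.1 + q.2 p.1)
    (by intros; simp only [Prod.fst_add, Prod.snd_add, LinearMap.add_apply, map_add]; ring)
    (by intros; simp only [Prod.smul_fst, Prod.smul_snd, LinearMap.smul_apply, map_smul,
          smul_eq_mul]; ring)
    (by intros; simp only [Prod.fst_add, Prod.snd_add, LinearMap.add_apply, map_add]; ring)
    (by intros; simp only [Prod.smul_fst, Prod.smul_snd, LinearMap.smul_apply, map_smul,
          smul_eq_mul]; ring)

noncomputable def dualBlockForm (R L : Type*) [CommRing R] [AddCommGroup L] [Module R L]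
    (A : Module.Dual R L →ₗ[R] Module.Dual R L →ₗ[R] R) :
    (L × Module.Dual R L) →ₗ[R] (L × Module.Dual R L) →ₗ[R] R :=
  LinearMap.mk₂ R (fun p q => A p.2 q.2)
    (by intros; simp only [Prod.snd_add, map_add, LinearMap.add_apply])
    (by intros; simp only [Prod.smul_snd, map_smul, LinearMap.smul_apply])
    (by intros; simp only [Prod.snd_add, map_add, LinearMap.add_apply])
    (by intros; simp only [Prod.smul_snd, map_smul, LinearMap.smul_apply])

@[simp] theorem hypForm_apply {R L : Type*} [CommRing R] [AddCommGroup L] [Module R L]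
    (v w : L × Module.Dual R L) : hypForm R L v w = v.2 w.1 + w.2 v.1 := rfl

@[simp] theorem dualBlockForm_apply {R L : Type*} [CommRing R] [AddCommGroup L] [Module R L]
    (A : Module.Dual R L →ₗ[R] Module.Dual R L →ₗ[R] R)
    (v w : L × Module.Dual R L) : dualBlockForm R L A v w = A v.2 w.2 := rfl

theorem exists_dual_family (R L : Type*) [CommRing R] [AddCommGroup L] [Module R L]
    [Module.Finite R L] [Module.Projective R L] :
    ∃ (n : ℕ) (x : Fin n → L) (f : Fin n → Module.Dual R L),
      ∀ l : L, ∑ j, f j l • x j = l := by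
  obtain ⟨n, fL, gL, -, -, hfg⟩ := Module.Finite.exists_comp_eq_id_of_projective R L
  refine ⟨n, fun j => fL (Pi.single j 1), fun j => LinearMap.proj j ∘ₗ gL, fun l => ?_⟩
  have : ∑ j, (gL l j) • fL (Pi.single j 1) = fL (gL l) := by
    simp only [← map_smul fL, ← map_sum fL]
    congr 1
    simp only [← Pi.single_smul, smul_eq_mul, mul_one]
    exact Finset.univ_sum_single (gL l)
  simpa using this.trans (LinearMap.congr_fun hfg l)

theorem hyp_baseChange_bijective (R L : Type*) [CommRing R] [AddCommGroup L] [Module R L]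
    [Module.Finite R L] [Module.Projective R L] :
    Function.Bijective (fun m : Polynomial R ⊗[R] (L × Module.Dual R L) =>
      LinearMap.BilinForm.baseChange (Polynomial R) (hypForm R L) m) := by
  classical
  obtain ⟨n, x, f, hx⟩ := exists_dual_family R L
  set H := LinearMap.BilinForm.baseChange (Polynomial R) (hypForm R L) with hH
  have hf : ∀ φ : Module.Dual R L, ∑ j, φ (x j) • f j = φ := by
    intro φ
    ext l
    calc (∑ j, φ (x j) • f j) l = ∑ j, φ (x j) * f j l := by
          simp [LinearMap.sum_apply]
      _ = ∑ j, φ (f j l • x j) := by simp [map_smul, mul_comm]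
      _ = φ l := by rw [← map_sum, hx l]
  set G : (Module.Dual (Polynomial R) (Polynomial R ⊗[R] (L × Module.Dual R L))) →
      Polynomial R ⊗[R] (L × Module.Dual R L) := fun φ =>
    ∑ j, (φ ((1 : Polynomial R) ⊗ₜ[R] ((x j : L), (0 : Module.Dual R L))) ⊗ₜ[R] ((0 : L), f j)
      + φ ((1 : Polynomial R) ⊗ₜ[R] ((0 : L), f j)) ⊗ₜ[R] ((x j : L), (0 : Module.Dual R L)))
    with hG
  have Gadd : ∀ φ ψ, G (φ + ψ) = G φ + G ψ := by
    intro φ ψ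
    simp only [hG, LinearMap.add_apply, add_tmul]
    rw [← Finset.sum_add_distrib]
    congr 1; ext j; abel
  have left : ∀ m, G (H m) = m := by
    intro m
    induction m using TensorProduct.induction_on with
    | zero => simp [hG]
    | add m m' h h' => rw [map_add, Gadd, h, h']
    | tmul p v =>
      obtain ⟨l, g⟩ := v
      simp only [hG, hH, LinearMap.BilinForm.baseChange_tmul, hypForm_apply, mul_one,
        LinearMap.zero_apply, add_zero, zero_add, map_zero]
      have step : ∀ j : Fin n, (g (x j) • p) ⊗ₜ[R] ((0 : L), f j)
            + (f j l • p) ⊗ₜ[R] ((x j : L), (0 : Module.Dual R L))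
          = p ⊗ₜ[R] (g (x j) • ((0 : L), f j)
              + f j l • ((x j : L), (0 : Module.Dual R L))) := by
        intro j
        rw [TensorProduct.smul_tmul, TensorProduct.smul_tmul, TensorProduct.tmul_add]
      rw [Finset.sum_congr rfl (fun j _ => step j), ← TensorProduct.tmul_sum]
      congr 1
      have hsum : ∑ j, (g (x j) • ((0 : L), f j)
          + f j l • ((x j : L), (0 : Module.Dual R L)))
          = ((∑ j, f j l • x j : L), (∑ j, g (x j) • f j : Module.Dual R L)) := by
        rw [Prod.ext_iff]
        constructor
        · simp [Prod.fst_sum]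
        · simp [Prod.snd_sum]
      rw [hsum, hx l, hf g]
  have right : ∀ φ, H (G φ) = φ := by
    intro φ
    apply LinearMap.ext
    intro m
    induction m using TensorProduct.induction_on with
    | zero => simp
    | add m m' h h' => rw [map_add, h, h', map_add]
    | tmul q w =>
      obtain ⟨l', g'⟩ := w
      rw [hG]
      simp only []
      rw [map_sum, LinearMap.sum_apply]
      have key : ∀ j : Fin n,
          H (φ ((1 : Polynomial R) ⊗ₜ[R] ((x j : L), (0 : Module.Dual R L))) ⊗ₜ[R] ((0 : L), f j)
            + φ ((1 : Polynomial R) ⊗ₜ[R] ((0 : L), f j)) ⊗ₜ[R] ((x j : L), (0 : Module.Dual R L)))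
            (q ⊗ₜ[R] (l', g'))
          = φ (f j l' • (q ⊗ₜ[R] ((x j : L), (0 : Module.Dual R L)))
            + g' (x j) • (q ⊗ₜ[R] ((0 : L), f j))) := by
        intro j
        rw [map_add, LinearMap.add_apply, map_add]
        rw [hH, LinearMap.BilinForm.baseChange_tmul, LinearMap.BilinForm.baseChange_tmul]
        simp only [hypForm_apply, LinearMap.zero_apply, map_zero, add_zero, zero_add]
        rw [LinearMap.map_smul_of_tower φ, LinearMap.map_smul_of_tower φ]
        have h1 : q ⊗ₜ[R] ((x j : L), (0 : Module.Dual R L))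
            = q • ((1 : Polynomial R) ⊗ₜ[R] ((x j : L), (0 : Module.Dual R L))) := by
          rw [TensorProduct.smul_tmul', smul_eq_mul, mul_one]
        have h2 : q ⊗ₜ[R] ((0 : L), f j)
            = q • ((1 : Polynomial R) ⊗ₜ[R] ((0 : L), f j)) := by
          rw [TensorProduct.smul_tmul', smul_eq_mul, mul_one]
        rw [h1, h2, map_smul, map_smul]
        simp only [smul_eq_mul]
        rw [mul_comm q]
        rw [mul_comm q]
      rw [Finset.sum_congr rfl (fun j _ => key j), ← map_sum φ]
      congr 1
      have step2 : ∀ j : Fin n, f j l' • (q ⊗ₜ[R] ((x j : L), (0 : Module.Dual R L)))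
            + g' (x j) • (q ⊗ₜ[R] ((0 : L), f j))
          = q ⊗ₜ[R] (f j l' • ((x j : L), (0 : Module.Dual R L))
              + g' (x j) • ((0 : L), f j)) := by
        intro j
        rw [← TensorProduct.tmul_smul, ← TensorProduct.tmul_smul, TensorProduct.tmul_add]
      rw [Finset.sum_congr rfl (fun j _ => step2 j), ← TensorProduct.tmul_sum]
      congr 1
      have hsum : ∑ j, (f j l' • ((x j : L), (0 : Module.Dual R L))
          + g' (x j) • ((0 : L), f j))
          = ((∑ j, f j l' • x j : L), (∑ j, g' (x j) • f j : Module.Dual R L)) := by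
        rw [Prod.ext_iff]
        constructor
        · simp [Prod.fst_sum]
        · simp [Prod.snd_sum]
      rw [hsum, hx l', hf g']
  exact Function.bijective_iff_has_inverse.mpr ⟨G, left, right⟩

/-- Let `L` be a finite locally free `R`-module and `A` a symmetric
bilinear form on `L^∨`.  The symmetric bilinear form on the `R[t]`-module
`L[t] ⊕ L^∨[t]` given by the block matrix `[[0, id], [id, t·A]]` is non-degenerate, its
specialization at `t = 1` is `[[0, id], [id, A]]`, and its specialization at `t = 0` is
the hyperbolic form `[[0, id], [id, 0]]` on `L ⊕ L^∨`. -/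
theorem hyperbolic_homotopy
    (R L : Type*) [CommRing R] [AddCommGroup L] [Module R L]
    [Module.Finite R L] [Module.Projective R L]
    (A : Module.Dual R L →ₗ[R] Module.Dual R L →ₗ[R] R)
    (hsymm : ∀ f g : Module.Dual R L, A f g = A g f)
    (𝔅 : LinearMap.BilinForm (Polynomial R) (Polynomial R ⊗[R] (L × Module.Dual R L)))
    (h𝔅 : 𝔅 = LinearMap.BilinForm.baseChange (Polynomial R) (hypForm R L) +
      (X : Polynomial R) • LinearMap.BilinForm.baseChange (Polynomial R) (dualBlockForm R L A)) :
    Function.Bijective (fun m : Polynomial R ⊗[R] (L × Module.Dual R L) => 𝔅 m) ∧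
    (∀ v w : L × Module.Dual R L,
      Polynomial.eval (1 : R) (𝔅 ((1 : Polynomial R) ⊗ₜ[R] v) ((1 : Polynomial R) ⊗ₜ[R] w)) =
        hypForm R L v w + dualBlockForm R L A v w) ∧
    (∀ v w : L × Module.Dual R L,
      Polynomial.eval (0 : R) (𝔅 ((1 : Polynomial R) ⊗ₜ[R] v) ((1 : Polynomial R) ⊗ₜ[R] w)) =
        hypForm R L v w) := by
  have hval : ∀ v w : L × Module.Dual R L,
      𝔅 ((1 : Polynomial R) ⊗ₜ[R] v) ((1 : Polynomial R) ⊗ₜ[R] w)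
        = C (hypForm R L v w) + X * C (dualBlockForm R L A v w) := by
    intro v w
    rw [h𝔅]
    simp only [LinearMap.add_apply, LinearMap.smul_apply,
      LinearMap.BilinForm.baseChange_tmul, mul_one, smul_eq_mul]
    rw [Algebra.smul_def, Algebra.smul_def, mul_one, mul_one]
    simp [Polynomial.algebraMap_eq]
  refine ⟨?_, ?_, ?_⟩
  · -- bijectivity
    set σ : (L × Module.Dual R L) →ₗ[R] (L × Module.Dual R L) :=
      (LinearMap.inl R L (Module.Dual R L)) ∘ₗ
        (((Module.evalEquiv R L).symm.toLinearMap ∘ₗ A) ∘ₗ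
          LinearMap.snd R L (Module.Dual R L)) with hσ
    have hσ_apply : ∀ v : L × Module.Dual R L,
        σ v = ((Module.evalEquiv R L).symm (A v.2), (0 : Module.Dual R L)) := by
      intro v; rfl
    have hσhyp : ∀ v w, hypForm R L (σ v) w = dualBlockForm R L A v w := by
      intro v w
      rw [hσ_apply]
      simp [Module.apply_evalEquiv_symm_apply]
    set σP := σ.baseChange (Polynomial R) with hσP
    have hσσ : ∀ m, σP (σP m) = 0 := by
      intro m
      induction m using TensorProduct.induction_on with
      | zero => simp
      | add m m' h h' => rw [map_add, map_add, h, h', add_zero]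
      | tmul p v =>
        rw [hσP, LinearMap.baseChange_tmul, LinearMap.baseChange_tmul]
        rw [hσ_apply, hσ_apply]
        simp
        rw [show ((0 : L), (0 : Module.Dual R L)) = 0 from rfl, TensorProduct.tmul_zero]
    set τ : Polynomial R ⊗[R] (L × Module.Dual R L) →ₗ[Polynomial R]
        Polynomial R ⊗[R] (L × Module.Dual R L) :=
      LinearMap.id + (X : Polynomial R) • σP with hτ
    have hτbij : Function.Bijective τ := by
      refine Function.bijective_iff_has_inverse.mpr
        ⟨fun m => m - (X : Polynomial R) • σP m, fun m => ?_, fun m => ?_⟩ <;>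
      · simp only [hτ, LinearMap.add_apply, LinearMap.id_apply, LinearMap.smul_apply,
          map_add, map_sub, map_smul, hσσ, smul_zero, sub_zero, add_zero]
        first
        | exact add_sub_cancel_right m _
        | exact sub_add_cancel m _
        | exact sub_add_cancel_right m _
        | abel
    have hkey : ∀ m, 𝔅 m = LinearMap.BilinForm.baseChange (Polynomial R) (hypForm R L) (τ m) := by
      intro m
      rw [h𝔅]
      induction m using TensorProduct.induction_on with
      | zero => simp
      | add m m' h h' => rw [map_add, map_add, h, h', map_add]
      | tmul p v =>
        apply LinearMap.ext
        intro nn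
        induction nn using TensorProduct.induction_on with
        | zero => simp
        | add m m' h h' => rw [map_add, h, h', map_add]
        | tmul q w =>
          simp only [hτ, LinearMap.add_apply, LinearMap.id_apply, LinearMap.smul_apply,
            hσP, LinearMap.baseChange_tmul]
          rw [map_add, LinearMap.add_apply, map_smul, LinearMap.smul_apply]
          simp only [LinearMap.BilinForm.baseChange_tmul, smul_eq_mul]
          rw [hσhyp]
    have : (fun m : Polynomial R ⊗[R] (L × Module.Dual R L) => 𝔅 m)
        = (fun m => LinearMap.BilinForm.baseChange (Polynomial R) (hypForm R L) m) ∘ τ := by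
      funext m; exact hkey m
    rw [this]
    exact (hyp_baseChange_bijective R L).comp hτbij
  · intro v w; rw [hval v w]; simp
  · intro v w; rw [hval v w]; simp
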